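/- Let n ≥ 1 and p ≥ 1 be integers, and let A be a real n×n matrix possessing the strong Perron–Frobenius property that is diagonalizable over ℂ: there exist an invertible complex n×n matrix P and a function d : Fin n → ℂ with (viewing A as a complex matrix) A = P · diag(d) · P⁻¹. Suppose no eigenvalue d(i) lies in the closed negative real axis (−∞, 0], and suppose there is a permutation σ of the index set with d(σ(i)) = conj(d(i)) for all i and conj(P(i,j)) = P(i,σ(j)) for all i,j. Then there exists a real n×n matrix B whose entrywise coercion to ℂ equals P · diag(i ↦ d(i)^(1/p)) · P⁻¹ (principal complex power), such that B possesses the strong Perron–Frobenius property and B^p = A. -/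

import Mathlib

open Polynomial Matrix
private lemma charpoly_diagonal_roots {n : ℕ} (d : Fin n → ℂ) :
    (Matrix.diagonal d).charpoly.roots = Finset.univ.val.map d := by
  have h : (Matrix.diagonal d).charpoly = ∏ i, (X - C (d i)) := by
    rw [Matrix.charpoly]
    have : charmatrix (Matrix.diagonal d) = Matrix.diagonal (fun i => X - C (d i)) := by
      ext i j
      rcases eq_or_ne i j with rfl | hij
      · simp [charmatrix_apply_eq]
      · simp [charmatrix_apply_ne _ _ _ hij, Matrix.diagonal_apply_ne _ hij]
    rw [this, Matrix.det_diagonal]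
  rw [h]
  have : ∏ i, (X - C (d i)) = ((Finset.univ.val.map d).map (fun a => X - C a)).prod := by
    rw [Multiset.map_map]
    rfl
  rw [this, roots_multiset_prod_X_sub_C]

private lemma charpoly_similar {n : ℕ} (P M : Matrix (Fin n) (Fin n) ℂ) (hP : IsUnit P) :
    (P * M * P⁻¹).charpoly = M.charpoly := by
  have hPdet : IsUnit P.det := (Matrix.isUnit_iff_isUnit_det P).mp hP
  have h1 : P * P⁻¹ = 1 := Matrix.mul_nonsing_inv P hPdet
  have key : charmatrix (P * M * P⁻¹) =
      P.map C * charmatrix M * P⁻¹.map C := by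
    rw [charmatrix, charmatrix, RingHom.mapMatrix_apply, RingHom.mapMatrix_apply,
      Matrix.mul_sub, Matrix.sub_mul]
    congr 1
    · have hc : Commute (Matrix.scalar (Fin n) (X : ℂ[X])) (P⁻¹.map C) :=
        Matrix.scalar_commute _ (fun r => Commute.all _ r) _
      rw [mul_assoc, hc.eq, ← mul_assoc, ← Matrix.map_mul, h1, Matrix.map_one _ (map_zero C) (map_one C),
        Matrix.one_mul]
    · rw [Matrix.map_mul, Matrix.map_mul]
  rw [Matrix.charpoly, Matrix.charpoly, key, Matrix.det_mul, Matrix.det_mul]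
  have h2 : (P.map C).det * (P⁻¹.map C).det = 1 := by
    rw [mul_comm, ← Matrix.det_mul, ← Matrix.map_mul, Matrix.nonsing_inv_mul P hPdet, Matrix.map_one _ (map_zero C) (map_one C),
      Matrix.det_one]
  calc (P.map C).det * (charmatrix M).det * (P⁻¹.map C).det
      = ((P.map C).det * (P⁻¹.map C).det) * (charmatrix M).det := by ring
    _ = (charmatrix M).det := by rw [h2, one_mul]

/-- The spectral radius of a real matrix: the maximum of the moduli of the complex
roots of its characteristic polynomial. -/
noncomputable def specRadius {n : ℕ} (A : Matrix (Fin n) (Fin n) ℝ) : ℝ :=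
  (((A.charpoly.map (algebraMap ℝ ℂ)).roots.map (fun z => ‖z‖₊)).sup : NNReal)

/-- The strong Perron–Frobenius property for a real matrix. -/
def HasStrongPF {n : ℕ} (A : Matrix (Fin n) (Fin n) ℝ) : Prop :=
  0 < specRadius A ∧
  (A.charpoly.map (algebraMap ℝ ℂ)).rootMultiplicity (specRadius A : ℂ) = 1 ∧
  (∃ x : Fin n → ℝ, (∀ i, 0 < x i) ∧ A.mulVec x = (specRadius A) • x) ∧
  (∀ μ ∈ (A.charpoly.map (algebraMap ℝ ℂ)).roots,
      μ ≠ (specRadius A : ℂ) → ‖μ‖ < specRadius A)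

/-- Eventual positivity of a real matrix. -/
def EventuallyPos {n : ℕ} (A : Matrix (Fin n) (Fin n) ℝ) : Prop :=
  ∃ p : ℕ, ∀ k ≥ p, ∀ i j, 0 < (A ^ k) i j

/-- Real p-th roots of diagonalizable matrices with the strong Perron–Frobenius
property, via the principal branch of the complex power. -/
theorem strongPF_root {n : ℕ} (hn : 1 ≤ n) (p : ℕ) (hp : 1 ≤ p)
    (A : Matrix (Fin n) (Fin n) ℝ) (hA : HasStrongPF A)
    (P : Matrix (Fin n) (Fin n) ℂ) (hP : IsUnit P) (d : Fin n → ℂ)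
    (hdiag : A.map Complex.ofReal = P * Matrix.diagonal d * P⁻¹)
    (hneg : ∀ i, d i ∉ Complex.ofReal '' Set.Iic (0 : ℝ))
    (σ : Equiv.Perm (Fin n))
    (hdσ : ∀ i, d (σ i) = starRingEnd ℂ (d i))
    (hPσ : ∀ i j, starRingEnd ℂ (P i j) = P i (σ j)) :
    ∃ B : Matrix (Fin n) (Fin n) ℝ,
      B.map Complex.ofReal = P * Matrix.diagonal (fun i => d i ^ (1 / (p : ℂ))) * P⁻¹ ∧
      HasStrongPF B ∧ B ^ p = A := by
  obtain ⟨hρ, hmult, ⟨x, hx, hxA⟩, hdom⟩ := hA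
  set ρ : ℝ := specRadius A with hρdef
  have hp0 : p ≠ 0 := by omega
  have hd0 : ∀ i, d i ≠ 0 := by
    intro i h
    exact hneg i ⟨0, Set.mem_Iic.mpr le_rfl, by simp [h]⟩
  have hdarg : ∀ i, (d i).arg ≠ Real.pi := by
    intro i h
    rcases Complex.arg_eq_pi_iff.mp h with ⟨hre, him⟩
    exact hneg i ⟨(d i).re, Set.mem_Iic.mpr hre.le,
      (Complex.ext (by simp) (by simp [him])).symm⟩
  set e : Fin n → ℂ := fun i => d i ^ (1 / (p : ℂ)) with he
  set Cm : Matrix (Fin n) (Fin n) ℂ := P * Matrix.diagonal e * P⁻¹ with hCm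
  have hPdet : IsUnit P.det := (Matrix.isUnit_iff_isUnit_det P).mp hP
  have hPP : P * P⁻¹ = 1 := Matrix.mul_nonsing_inv P hPdet
  have hPP' : P⁻¹ * P = 1 := Matrix.nonsing_inv_mul P hPdet
  -- conjugation of eigenvalue roots
  have hconj_e : ∀ i, starRingEnd ℂ (e i) = e (σ i) := by
    intro i
    have h1 : starRingEnd ℂ (1 / (p : ℂ)) = 1 / (p : ℂ) := by simp
    have h2 := Complex.conj_cpow (d i) (1 / (p : ℂ)) (hdarg i)
    rw [h1] at h2
    show starRingEnd ℂ (d i ^ (1 / (p:ℂ))) = d (σ i) ^ (1 / (p:ℂ))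
    rw [hdσ i, h2]
  -- conjugation of P, P⁻¹
  have hconjP : P.map (starRingEnd ℂ) = P.submatrix id ⇑σ := by
    ext i j; simp [Matrix.map_apply, hPσ]
  have hconjPinv : P⁻¹.map (starRingEnd ℂ) = P⁻¹.submatrix ⇑σ id := by
    have hQ : P.submatrix id ⇑σ * P⁻¹.submatrix ⇑σ id = 1 := by
      rw [Matrix.submatrix_mul_equiv, hPP]
      simp
    have h2 : P⁻¹.map (starRingEnd ℂ) * P.map (starRingEnd ℂ) = 1 := by
      rw [← Matrix.map_mul, hPP', Matrix.map_one _ (map_zero _) (map_one _)]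
    calc P⁻¹.map (starRingEnd ℂ)
        = P⁻¹.map (starRingEnd ℂ) * (P.submatrix id ⇑σ * P⁻¹.submatrix ⇑σ id) := by
          rw [hQ, Matrix.mul_one]
      _ = (P⁻¹.map (starRingEnd ℂ) * P.map (starRingEnd ℂ)) * P⁻¹.submatrix ⇑σ id := by
          rw [hconjP, Matrix.mul_assoc]
      _ = P⁻¹.submatrix ⇑σ id := by rw [h2, Matrix.one_mul]
  have hconjC : Cm.map (starRingEnd ℂ) = Cm := by
    rw [hCm, Matrix.map_mul, Matrix.map_mul, hconjP, hconjPinv]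
    have hdiagmap : (Matrix.diagonal e).map (starRingEnd ℂ)
        = (Matrix.diagonal e).submatrix ⇑σ ⇑σ := by
      rw [Matrix.diagonal_map (map_zero _)]
      ext i j
      rcases eq_or_ne i j with rfl | hij
      · simp [hconj_e]
      · rw [Matrix.diagonal_apply_ne _ hij, Matrix.submatrix_apply,
          Matrix.diagonal_apply_ne _ (fun h => hij (σ.injective h))]
    rw [hdiagmap, Matrix.submatrix_mul_equiv, Matrix.submatrix_mul_equiv,
      Matrix.submatrix_id_id]
  -- the real matrix B
  set B : Matrix (Fin n) (Fin n) ℝ := Matrix.of (fun i j => (Cm i j).re) with hB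
  have hBC : B.map Complex.ofReal = Cm := by
    ext i j
    have h := congrFun (congrFun hconjC i) j
    exact Complex.conj_eq_iff_re.mp h
  -- powers of conjugated matrices
  have hpowconj : ∀ (D : Matrix (Fin n) (Fin n) ℂ) (k : ℕ),
      (P * D * P⁻¹) ^ k = P * D ^ k * P⁻¹ := by
    intro D k
    induction k with
    | zero => simp [hPP]
    | succ k ih =>
        rw [pow_succ, ih, pow_succ]
        calc P * D ^ k * P⁻¹ * (P * D * P⁻¹)
            = P * D ^ k * (P⁻¹ * P) * D * P⁻¹ := by
              simp only [Matrix.mul_assoc]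
          _ = P * (D ^ k * D) * P⁻¹ := by
              rw [hPP']; simp only [Matrix.mul_one, Matrix.mul_assoc]
  have hep : ∀ i, e i ^ p = d i := by
    intro i
    show (d i ^ (1 / (p:ℂ))) ^ p = d i
    rw [one_div]
    exact Complex.cpow_nat_inv_pow _ hp0
  have hCp : Cm ^ p = A.map Complex.ofReal := by
    rw [hCm, hpowconj, Matrix.diagonal_pow, hdiag]
    have hpe : e ^ p = d := funext hep
    rw [hpe]
  have hBpA : B ^ p = A := by
    have h1 : (B ^ p).map Complex.ofReal = A.map Complex.ofReal := by
      have h2 : (B ^ p).map Complex.ofReal = (B.map Complex.ofReal) ^ p := by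
        have := map_pow (Complex.ofRealHom.mapMatrix) B p
        simp only [RingHom.mapMatrix_apply] at this; exact this
      rw [h2, hBC, hCp]
    ext i j
    have h3 := congrFun (congrFun h1 i) j
    simp only [Matrix.map_apply] at h3
    exact_mod_cast h3
  -- charpoly roots
  have halg : ⇑(algebraMap ℝ ℂ) = Complex.ofReal := by
    funext r; simp
  have hrootsA : (A.charpoly.map (algebraMap ℝ ℂ)).roots = Finset.univ.val.map d := by
    rw [← Matrix.charpoly_map A (algebraMap ℝ ℂ), halg, hdiag,
      charpoly_similar P _ hP, charpoly_diagonal_roots]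
  have hrootsB : (B.charpoly.map (algebraMap ℝ ℂ)).roots = Finset.univ.val.map e := by
    rw [← Matrix.charpoly_map B (algebraMap ℝ ℂ), halg, hBC, hCm,
      charpoly_similar P _ hP, charpoly_diagonal_roots]
  -- spectral data of A
  have hcountd : (Finset.univ.val.map d).count ((ρ : ℝ) : ℂ) = 1 := by
    rw [← hrootsA, Polynomial.count_roots]
    exact hmult
  have hdomd : ∀ i, d i ≠ ((ρ : ℝ) : ℂ) → ‖d i‖ < ρ := by
    intro i hi
    exact hdom _ (by rw [hrootsA]; exact Multiset.mem_map_of_mem _ (Finset.mem_univ i)) hi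
  have hled : ∀ i, ‖d i‖ ≤ ρ := by
    intro i
    rcases eq_or_ne (d i) ((ρ:ℝ):ℂ) with h | h
    · rw [h, Complex.norm_real, Real.norm_of_nonneg hρ.le]
    · exact (hdomd i h).le
  -- |e i| = |d i| ^ (1/p)
  have habse : ∀ i, ‖e i‖ = (‖d i‖) ^ (1 / (p:ℝ)) := by
    intro i
    have hw : (1 / (p:ℂ)) = (((1 / (p:ℝ)) : ℝ) : ℂ) := by push_cast; ring
    show ‖d i ^ (1 / (p:ℂ))‖ = _
    rw [hw, Complex.norm_cpow_of_ne_zero (hd0 i)]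
    simp
  -- e i = ρ' ↔ d i = ρ
  have hρ'p : (ρ ^ (1 / (p:ℝ))) ^ p = ρ := by
    rw [← Real.rpow_natCast (ρ ^ (1 / (p:ℝ))) p, ← Real.rpow_mul hρ.le]
    rw [one_div, inv_mul_cancel₀ (by exact_mod_cast hp0), Real.rpow_one]
  have heiff : ∀ i, e i = ((ρ ^ (1 / (p:ℝ)) : ℝ) : ℂ) ↔ d i = ((ρ : ℝ) : ℂ) := by
    intro i
    constructor
    · intro h
      have h2 := hep i
      rw [h] at h2
      rw [← h2, ← Complex.ofReal_pow, hρ'p]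
    · intro h
      show d i ^ (1 / (p:ℂ)) = _
      rw [h, Complex.ofReal_cpow hρ.le]
      congr 1
      push_cast
      ring
  obtain ⟨i₀, hi₀⟩ : ∃ i, d i = ((ρ:ℝ):ℂ) := by
    have := hcountd
    have hmem : ((ρ:ℝ):ℂ) ∈ Finset.univ.val.map d := by
      rw [← Multiset.count_pos, hcountd]; norm_num
    rcases Multiset.mem_map.mp hmem with ⟨i, _, hi⟩
    exact ⟨i, hi⟩
  -- spectral radius of B
  have hρ'B : specRadius B = ρ ^ (1 / (p:ℝ)) := by
    have hρ'nn : (0:ℝ) ≤ ρ ^ (1 / (p:ℝ)) := (Real.rpow_pos_of_pos hρ _).le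
    have hsup : ((B.charpoly.map (algebraMap ℝ ℂ)).roots.map (fun z => ‖z‖₊)).sup
        = ‖((ρ ^ (1 / (p:ℝ)) : ℝ) : ℂ)‖₊ := by
      rw [hrootsB, Multiset.map_map]
      apply le_antisymm
      · apply Multiset.sup_le.mpr
        intro a ha
        rcases Multiset.mem_map.mp ha with ⟨i, _, rfl⟩
        show ‖e i‖₊ ≤ _
        rw [← NNReal.coe_le_coe]
        simp only [coe_nnnorm, Complex.norm_real,
          Real.norm_of_nonneg hρ'nn]
        rw [habse i]
        exact Real.rpow_le_rpow (norm_nonneg _) (hled i) (by positivity)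
      · apply Multiset.le_sup
        rw [Multiset.mem_map]
        refine ⟨i₀, Finset.mem_univ_val _, ?_⟩
        show ‖e i₀‖₊ = _
        congr 1
        exact (heiff i₀).mpr hi₀
    show ((((B.charpoly.map (algebraMap ℝ ℂ)).roots.map (fun z => ‖z‖₊)).sup : NNReal) : ℝ) = _
    rw [hsup]
    simp only [coe_nnnorm, Complex.norm_real]
    exact Real.norm_of_nonneg hρ'nn
  have hmultB : (B.charpoly.map (algebraMap ℝ ℂ)).rootMultiplicity ((specRadius B : ℝ) : ℂ) = 1 := by
    rw [← Polynomial.count_roots, hrootsB, hρ'B]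
    have h1 : (Finset.univ.val.map e).count ((ρ ^ (1/(p:ℝ)) : ℝ) : ℂ)
        = (Finset.univ.val.map d).count ((ρ : ℝ) : ℂ) := by
      rw [Multiset.count_map, Multiset.count_map]
      congr 1
      apply Multiset.filter_congr
      intro i _
      constructor
      · intro hh
        exact ((heiff i).mp hh.symm).symm
      · intro hh
        exact ((heiff i).mpr hh.symm).symm
    rw [h1, hcountd]
  set xC : Fin n → ℂ := fun i => (x i : ℂ) with hxCdef
  have hxC : (A.map Complex.ofReal).mulVec xC = ((ρ:ℝ):ℂ) • xC := by
    funext j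
    have h := congrFun hxA j
    simp only [hxCdef, Matrix.mulVec, dotProduct, Pi.smul_apply, smul_eq_mul,
      Matrix.map_apply] at h ⊢
    exact_mod_cast h
  set y : Fin n → ℂ := P⁻¹.mulVec xC with hydef
  have hy : ∀ i, d i * y i = ((ρ:ℝ):ℂ) * y i := by
    have h2 : (P⁻¹ * (P * Matrix.diagonal d * P⁻¹)).mulVec xC = ((ρ:ℝ):ℂ) • y := by
      rw [← Matrix.mulVec_mulVec, ← hdiag, hxC, Matrix.mulVec_smul]
    have h3 : P⁻¹ * (P * Matrix.diagonal d * P⁻¹) = Matrix.diagonal d * P⁻¹ := by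
      calc P⁻¹ * (P * Matrix.diagonal d * P⁻¹)
          = (P⁻¹ * P) * (Matrix.diagonal d * P⁻¹) := by simp only [Matrix.mul_assoc]
        _ = Matrix.diagonal d * P⁻¹ := by rw [hPP', Matrix.one_mul]
    rw [h3, ← Matrix.mulVec_mulVec] at h2
    intro i
    have h4 := congrFun h2 i
    simp only [Matrix.mulVec_diagonal, Pi.smul_apply, smul_eq_mul] at h4; exact h4
  have hye : (Matrix.diagonal e).mulVec y = ((ρ ^ (1/(p:ℝ)) : ℝ) : ℂ) • y := by
    funext i
    rw [Matrix.mulVec_diagonal]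
    rcases eq_or_ne (y i) 0 with h0 | h0
    · simp [h0]
    · have hdi : d i = ((ρ:ℝ):ℂ) := mul_right_cancel₀ h0 (hy i)
      rw [Pi.smul_apply, smul_eq_mul, (heiff i).mpr hdi]
  have hCx : Cm.mulVec xC = ((ρ ^ (1/(p:ℝ)) : ℝ) : ℂ) • xC := by
    calc Cm.mulVec xC = (P * Matrix.diagonal e).mulVec y := by
          rw [hCm, ← Matrix.mulVec_mulVec]
      _ = P.mulVec ((Matrix.diagonal e).mulVec y) := by rw [← Matrix.mulVec_mulVec]
      _ = ((ρ ^ (1/(p:ℝ)) : ℝ) : ℂ) • P.mulVec y := by rw [hye, Matrix.mulVec_smul]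
      _ = ((ρ ^ (1/(p:ℝ)) : ℝ) : ℂ) • xC := by
          rw [hydef, Matrix.mulVec_mulVec, hPP, Matrix.one_mulVec]
  have hBx : B.mulVec x = specRadius B • x := by
    funext j
    have h5 := congrFun hCx j
    rw [← hBC] at h5
    simp only [hxCdef, Matrix.mulVec, dotProduct, Matrix.map_apply, Pi.smul_apply,
      smul_eq_mul] at h5 ⊢
    rw [hρ'B]
    exact_mod_cast h5
  have hdomB : ∀ μ ∈ (B.charpoly.map (algebraMap ℝ ℂ)).roots,
      μ ≠ ((specRadius B : ℝ) : ℂ) → ‖μ‖ < specRadius B := by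
    intro μ hμ hne
    rw [hrootsB] at hμ
    rcases Multiset.mem_map.mp hμ with ⟨i, _, rfl⟩
    rw [hρ'B] at hne ⊢
    have hdne : d i ≠ ((ρ:ℝ):ℂ) := fun h => hne ((heiff i).mpr h)
    calc ‖e i‖ = ‖d i‖ ^ (1/(p:ℝ)) := habse i
      _ < ρ ^ (1/(p:ℝ)) :=
          Real.rpow_lt_rpow (norm_nonneg _) (hdomd i hdne) (by positivity)
  have hρB : 0 < specRadius B := by
    rw [hρ'B]; exact Real.rpow_pos_of_pos hρ _
  exact ⟨B, hBC, ⟨hρB, hmultB, ⟨x, hx, hBx⟩, hdomB⟩, hBpA⟩
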